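/- There exist universal constants C₁ > 0 and D with the following property: for every N ≥ 1, every integer n with 0 ≤ n ≤ N, and every collection of independent Bernoulli random variables ε_1,…,ε_N with means p_1,…,p_N ∈ (0,1) satisfying Σ_{i=1}^N p_i = n, if d_N = Σ_{i=1}^N p_i(1−p_i) ≥ D, then P{ Σ_{i=1}^N ε_i = n } ≥ C₁ / √(d_N). -/

import Mathlib

open Finset

namespace PB

variable {ι : Type*} [DecidableEq ι] (p : ι → ℝ)

noncomputable def bseq (s : Finset ι) (k : ℕ) : ℝ :=
  ∑ T ∈ s.powersetCard k, ∏ i ∈ s, (if i ∈ T then p i else 1 - p i)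

lemma bseq_empty_zero : bseq p ∅ 0 = 1 := by simp [bseq]

lemma bseq_eq_zero {s : Finset ι} {k : ℕ} (h : s.card < k) : bseq p s k = 0 := by
  simp [bseq, powersetCard_eq_empty.2 h]

lemma bseq_nonneg {s : Finset ι} (hp : ∀ i ∈ s, 0 < p i ∧ p i < 1) (k : ℕ) :
    0 ≤ bseq p s k := by
  refine sum_nonneg fun T _ => prod_nonneg fun i hi => ?_
  by_cases h : i ∈ T <;> simp only [h, if_true, if_false]
  · exact (hp i hi).1.le
  · linarith [(hp i hi).2]

lemma bseq_pos {s : Finset ι} (hp : ∀ i ∈ s, 0 < p i ∧ p i < 1) {k : ℕ}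
    (h : k ≤ s.card) : 0 < bseq p s k := by
  obtain ⟨T, hT⟩ := (powersetCard_nonempty (s := s) (n := k)).2 h
  refine sum_pos' (fun T' _ => prod_nonneg fun i hi => ?_) ⟨T, hT, prod_pos fun i hi => ?_⟩
  · by_cases hh : i ∈ T' <;> simp only [hh, if_true, if_false]
    · exact (hp i hi).1.le
    · linarith [(hp i hi).2]
  · by_cases hh : i ∈ T <;> simp only [hh, if_true, if_false]
    · exact (hp i hi).1
    · linarith [(hp i hi).2]

lemma bseq_insert_zero {s : Finset ι} {j : ι} (hj : j ∉ s) :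
    bseq p (insert j s) 0 = (1 - p j) * bseq p s 0 := by
  simp only [bseq, powersetCard_zero, sum_singleton, prod_insert hj, notMem_empty, if_false,
    mul_comm]

lemma bseq_insert_succ {s : Finset ι} {j : ι} (hj : j ∉ s) (k : ℕ) :
    bseq p (insert j s) (k+1) = (1 - p j) * bseq p s (k+1) + p j * bseq p s k := by
  classical
  have hdisj : Disjoint (s.powersetCard (k+1)) ((s.powersetCard k).image (insert j)) := by
    rw [Finset.disjoint_left]
    intro T hT hT'
    obtain ⟨T', hT'', rfl⟩ := Finset.mem_image.1 hT'
    have : insert j T' ⊆ s := (mem_powersetCard.1 hT).1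
    exact hj (this (mem_insert_self j T'))
  rw [bseq, powersetCard_succ_insert hj, sum_union hdisj]
  congr 1
  · simp only [bseq, mul_sum]
    refine sum_congr rfl fun T hT => ?_
    have hTs : T ⊆ s := (mem_powersetCard.1 hT).1
    have hjT : j ∉ T := fun h => hj (hTs h)
    rw [prod_insert hj, if_neg hjT]
  · have hinj : ∀ T ∈ s.powersetCard k, ∀ T' ∈ s.powersetCard k,
        insert j T = insert j T' → T = T' := by
      intro T hT T' hT' hE
      have h1 : j ∉ T := fun h => hj ((mem_powersetCard.1 hT).1 h)
      have h2 : j ∉ T' := fun h => hj ((mem_powersetCard.1 hT').1 h)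
      have := congrArg (Finset.erase · j) hE
      simpa [Finset.erase_insert, h1, h2] using this
    rw [sum_image hinj]
    simp only [bseq, mul_sum]
    refine sum_congr rfl fun T hT => ?_
    have hTs : T ⊆ s := (mem_powersetCard.1 hT).1
    have hjT : j ∉ T := fun h => hj (hTs h)
    rw [prod_insert hj, if_pos (mem_insert_self j T)]
    congr 1
    refine prod_congr rfl fun i hi => ?_
    have hij : i ≠ j := fun h => hj (h ▸ hi)
    by_cases hiT : i ∈ T
    · rw [if_pos hiT, if_pos (mem_insert_of_mem hiT)]
    · rw [if_neg hiT, if_neg (by simp [hij, hiT])]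

lemma bseq_sum_insert {s : Finset ι} {j : ι} (hj : j ∉ s) (g : ℕ → ℝ) :
    ∑ k ∈ range (s.card + 2), g k * bseq p (insert j s) k
      = ∑ k ∈ range (s.card + 1), ((1 - p j) * g k + p j * g (k+1)) * bseq p s k := by
  have hA : bseq p s (s.card + 1) = 0 := bseq_eq_zero p (Nat.lt_succ_self _)
  have e1 : ∑ k ∈ range (s.card + 2), g k * bseq p (insert j s) k
      = (∑ k ∈ range (s.card + 1), g (k+1) * bseq p (insert j s) (k+1))
        + g 0 * bseq p (insert j s) 0 :=
    Finset.sum_range_succ' (fun k => g k * bseq p (insert j s) k) (s.card + 1)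
  have e2 : ∀ k ∈ range (s.card + 1), g (k+1) * bseq p (insert j s) (k+1)
      = (1 - p j) * (g (k+1) * bseq p s (k+1)) + p j * (g (k+1) * bseq p s k) := by
    intro k _; rw [bseq_insert_succ p hj]; ring
  have e3 : ∑ k ∈ range (s.card + 1), g (k+1) * bseq p s (k+1)
      = ∑ k ∈ range (s.card + 1), g k * bseq p s k - g 0 * bseq p s 0 := by
    have h1 : ∑ k ∈ range (s.card + 1), g (k+1) * bseq p s (k+1)
        = (∑ k ∈ range s.card, g (k+1) * bseq p s (k+1))
          + g (s.card + 1) * bseq p s (s.card + 1) :=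
      Finset.sum_range_succ (fun k => g (k+1) * bseq p s (k+1)) s.card
    have h2 : ∑ k ∈ range (s.card + 1), g k * bseq p s k
        = (∑ k ∈ range s.card, g (k+1) * bseq p s (k+1)) + g 0 * bseq p s 0 :=
      Finset.sum_range_succ' (fun k => g k * bseq p s k) s.card
    rw [h1, h2, hA]; ring
  rw [e1, sum_congr rfl e2, sum_add_distrib, ← mul_sum, ← mul_sum, e3,
    bseq_insert_zero p hj]
  have e4 : ∀ k ∈ range (s.card + 1), ((1 - p j) * g k + p j * g (k+1)) * bseq p s k
      = (1 - p j) * (g k * bseq p s k) + p j * (g (k+1) * bseq p s k) := by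
    intro k _; ring
  rw [sum_congr rfl e4, sum_add_distrib, ← mul_sum, ← mul_sum]
  ring



variable {ι : Type*} [DecidableEq ι] (p : ι → ℝ)

lemma bseq_moments {s : Finset ι} (hp : ∀ i ∈ s, 0 < p i ∧ p i < 1) :
    (∑ k ∈ range (s.card + 1), bseq p s k = 1)
  ∧ (∑ k ∈ range (s.card + 1), ((k:ℝ) - ∑ i ∈ s, p i) * bseq p s k = 0)
  ∧ (∑ k ∈ range (s.card + 1), ((k:ℝ) - ∑ i ∈ s, p i)^2 * bseq p s k
       = ∑ i ∈ s, p i * (1 - p i))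
  ∧ (∑ k ∈ range (s.card + 1), ((k:ℝ) - ∑ i ∈ s, p i)^4 * bseq p s k
       ≤ 3 * (∑ i ∈ s, p i * (1 - p i))^2 + (∑ i ∈ s, p i * (1 - p i))) := by
  classical
  induction s using Finset.induction with
  | empty => simp [bseq_empty_zero]
  | @insert j s hj ih =>
    have hpj := hp j (mem_insert_self j s)
    have hps : ∀ i ∈ s, 0 < p i ∧ p i < 1 := fun i hi => hp i (mem_insert_of_mem hi)
    obtain ⟨ih0, ih1, ih2, ih4⟩ := ih hps
    have hcard : (insert j s).card = s.card + 1 := card_insert_of_notMem hj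
    have hμ : ∑ i ∈ insert j s, p i = p j + ∑ i ∈ s, p i := sum_insert hj
    have hV : ∑ i ∈ insert j s, p i * (1 - p i)
        = p j * (1 - p j) + ∑ i ∈ s, p i * (1 - p i) := sum_insert hj
    set q := p j
    set μ := ∑ i ∈ s, p i
    set V := ∑ i ∈ s, p i * (1 - p i)
    have hv0 : 0 ≤ q * (1 - q) := by nlinarith [hpj.1, hpj.2]
    rw [hcard, hμ, hV]
    refine ⟨?_, ?_, ?_, ?_⟩
    · have h := bseq_sum_insert p hj (fun _ => (1:ℝ))
      have h2 : ∑ k ∈ range (s.card + 1 + 1), bseq p (insert j s) k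
          = ∑ k ∈ range (s.card + 1), ((1 - q) * 1 + q * 1) * bseq p s k := by
        refine Eq.trans ?_ h
        refine sum_congr rfl fun k _ => ?_
        simp
      rw [h2]
      refine Eq.trans (sum_congr rfl fun k _ => by ring_nf) ih0
    · have h := bseq_sum_insert p hj (fun k => ((k:ℝ) - (q + μ)))
      have h2 : ∑ k ∈ range (s.card + 1 + 1), ((k:ℝ) - (q + μ)) * bseq p (insert j s) k
          = ∑ k ∈ range (s.card + 1),
              ((1 - q) * ((k:ℝ) - (q + μ)) + q * (((k+1:ℕ):ℝ) - (q + μ))) * bseq p s k := h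
      rw [h2]
      refine Eq.trans (sum_congr rfl fun k _ => ?_) ih1
      push_cast; ring
    · have h := bseq_sum_insert p hj (fun k => ((k:ℝ) - (q + μ))^2)
      have h2 : ∑ k ∈ range (s.card + 1 + 1), ((k:ℝ) - (q + μ))^2 * bseq p (insert j s) k
          = ∑ k ∈ range (s.card + 1),
              ((1 - q) * ((k:ℝ) - (q + μ))^2 + q * (((k+1:ℕ):ℝ) - (q + μ))^2) * bseq p s k := h
      rw [h2]
      have h3 : ∀ k ∈ range (s.card + 1),
          ((1 - q) * ((k:ℝ) - (q + μ))^2 + q * (((k+1:ℕ):ℝ) - (q + μ))^2) * bseq p s k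
          = ((k:ℝ) - μ)^2 * bseq p s k + (q * (1 - q)) * bseq p s k := by
        intro k _; push_cast; ring
      rw [sum_congr rfl h3, sum_add_distrib, ih2, ← mul_sum, ih0]
      ring
    · have h := bseq_sum_insert p hj (fun k => ((k:ℝ) - (q + μ))^4)
      have h2 : ∑ k ∈ range (s.card + 1 + 1), ((k:ℝ) - (q + μ))^4 * bseq p (insert j s) k
          = ∑ k ∈ range (s.card + 1),
              ((1 - q) * ((k:ℝ) - (q + μ))^4 + q * (((k+1:ℕ):ℝ) - (q + μ))^4) * bseq p s k := h
      rw [h2]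
      have h3 : ∀ k ∈ range (s.card + 1),
          ((1 - q) * ((k:ℝ) - (q + μ))^4 + q * (((k+1:ℕ):ℝ) - (q + μ))^4) * bseq p s k
          = ((k:ℝ) - μ)^4 * bseq p s k
            + (6 * (q * (1-q))) * (((k:ℝ) - μ)^2 * bseq p s k)
            + (4 * (q * (1-q)) * (1 - 2*q)) * (((k:ℝ) - μ) * bseq p s k)
            + (q * (1-q) * (1 - 3 * (q * (1-q)))) * bseq p s k := by
        intro k _; push_cast; ring
      rw [sum_congr rfl h3]
      simp only [sum_add_distrib, ← mul_sum, ih0, ih1, ih2, mul_zero, mul_one, add_zero]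
      nlinarith [ih4, hv0, sq_nonneg (q * (1 - q))]


lemma bseq_logconcave (s : Finset ι) :
    (∀ i ∈ s, 0 < p i ∧ p i < 1) →
      ∀ k : ℕ, bseq p s (k+2) * bseq p s k ≤ bseq p s (k+1)^2 := by
  classical
  induction s using Finset.induction with
  | empty =>
    intro _ k
    have h2 : bseq p (∅ : Finset ι) (k+2) = 0 := bseq_eq_zero p (by simp)
    rw [h2, zero_mul]
    positivity
  | @insert j s hj ih =>
    intro hp k
    have hpj := hp j (mem_insert_self j s)
    have hps : ∀ i ∈ s, 0 < p i ∧ p i < 1 := fun i hi => hp i (mem_insert_of_mem hi)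
    have key := ih hps
    have hnn : ∀ m, 0 ≤ bseq p s m := bseq_nonneg p hps
    have hq0 : (0:ℝ) ≤ p j := hpj.1.le
    have hq1 : p j ≤ 1 := hpj.2.le
    have prodle : ∀ m, bseq p s (m+3) * bseq p s m ≤ bseq p s (m+2) * bseq p s (m+1) := by
      intro m
      by_cases hm : m + 2 ≤ s.card
      · have h1 : 0 < bseq p s (m+1) := bseq_pos p hps (by omega)
        have h2 : 0 < bseq p s (m+2) := bseq_pos p hps hm
        have e1 := key (m+1)
        have e2 := key m
        nlinarith [mul_le_mul e1 e2 (mul_nonneg (hnn (m+2)) (hnn m)) (sq_nonneg _),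
          mul_pos h1 h2, hnn (m+3), hnn m]
      · have h3 : bseq p s (m+3) = 0 := bseq_eq_zero p (by omega)
        rw [h3, zero_mul]
        exact mul_nonneg (hnn _) (hnn _)
    cases k with
    | zero =>
      rw [bseq_insert_zero p hj, bseq_insert_succ p hj, bseq_insert_succ p hj]
      have e0 : bseq p s 2 * bseq p s 0 ≤ bseq p s 1 ^ 2 := key 0
      show ((1 - p j) * bseq p s 2 + p j * bseq p s 1) * ((1 - p j) * bseq p s 0)
        ≤ ((1 - p j) * bseq p s 1 + p j * bseq p s 0) ^ 2
      nlinarith [mul_le_mul_of_nonneg_left e0 (sq_nonneg (1 - p j)),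
        mul_nonneg (mul_nonneg hq0 (sub_nonneg.2 hq1)) (mul_nonneg (hnn 1) (hnn 0)),
        sq_nonneg (p j * bseq p s 0)]
    | succ m =>
      rw [bseq_insert_succ p hj, bseq_insert_succ p hj, bseq_insert_succ p hj]
      have e1 : bseq p s (m+3) * bseq p s (m+1) ≤ bseq p s (m+2) ^ 2 := key (m+1)
      have e2 : bseq p s (m+2) * bseq p s m ≤ bseq p s (m+1) ^ 2 := key m
      have e3 : bseq p s (m+3) * bseq p s m ≤ bseq p s (m+2) * bseq p s (m+1) := prodle m
      show ((1 - p j) * bseq p s (m+3) + p j * bseq p s (m+2))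
          * ((1 - p j) * bseq p s (m+1) + p j * bseq p s m)
        ≤ ((1 - p j) * bseq p s (m+2) + p j * bseq p s (m+1)) ^ 2
      nlinarith [mul_le_mul_of_nonneg_left e1 (sq_nonneg (1 - p j)),
        mul_le_mul_of_nonneg_left e2 (sq_nonneg (p j)),
        mul_le_mul_of_nonneg_left e3 (mul_nonneg hq0 (sub_nonneg.2 hq1))]

lemma side_bound (a w : ℕ → ℝ) (M T : ℕ) (A d s : ℝ)
    (ha : ∀ k, 0 ≤ a k)
    (hw : ∀ k, 0 ≤ w k)
    (hd : ∑ k ∈ range M, (w k)^2 * a k ≤ d)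
    (hcard : ((range M).filter (fun k => 0 < w k ∧ w k ≤ (T:ℝ))).card ≤ T)
    (hbound : ∀ k ∈ range M, 0 < w k → w k ≤ (T:ℝ) → a k ≤ A)
    (hA : 0 ≤ A) (hT : 0 < T)
    (hlow : s ≤ ∑ k ∈ range M, w k * a k) :
    s ≤ (T:ℝ)^2 * A + d / T := by
  have hTR : (0:ℝ) < (T:ℝ) := by exact_mod_cast hT
  have step : ∑ k ∈ range M, w k * a k
      ≤ ∑ k ∈ range M, (if 0 < w k ∧ w k ≤ (T:ℝ) then (T:ℝ) * A else (w k)^2 * a k / T) := by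
    refine sum_le_sum fun k hk => ?_
    by_cases h : 0 < w k ∧ w k ≤ (T:ℝ)
    · rw [if_pos h]
      exact mul_le_mul h.2 (hbound k hk h.1 h.2) (ha k) hTR.le
    · rw [if_neg h]
      rcases lt_or_ge (w k) ((T:ℝ)) with hlt | hge
      · have hw0 : w k = 0 := by
          by_contra hne
          exact h ⟨lt_of_le_of_ne (hw k) (Ne.symm hne), hlt.le⟩
        rw [hw0, zero_mul]
        norm_num
      · rcases eq_or_lt_of_le hge with heq | hgt
        · exact absurd ⟨hTR.trans_le heq.le, heq.ge⟩ h
        · rw [le_div_iff₀ hTR]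
          have : w k * a k * (T:ℝ) ≤ w k * a k * w k :=
            mul_le_mul_of_nonneg_left hgt.le (mul_nonneg (hw k) (ha k))
          nlinarith [this]
  have hsplit : ∑ k ∈ range M, (if 0 < w k ∧ w k ≤ (T:ℝ) then (T:ℝ) * A else (w k)^2 * a k / T)
      = (∑ k ∈ (range M).filter (fun k => 0 < w k ∧ w k ≤ (T:ℝ)), (T:ℝ) * A)
        + ∑ k ∈ (range M).filter (fun k => ¬(0 < w k ∧ w k ≤ (T:ℝ))), (w k)^2 * a k / T :=
    Finset.sum_ite _ _
  have h1 : (∑ k ∈ (range M).filter (fun k => 0 < w k ∧ w k ≤ (T:ℝ)), (T:ℝ) * A)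
      ≤ (T:ℝ)^2 * A := by
    rw [sum_const, nsmul_eq_mul]
    have hc : (((range M).filter (fun k => 0 < w k ∧ w k ≤ (T:ℝ))).card : ℝ) ≤ (T:ℝ) := by
      exact_mod_cast hcard
    nlinarith [mul_nonneg hTR.le hA]
  have h2 : ∑ k ∈ (range M).filter (fun k => ¬(0 < w k ∧ w k ≤ (T:ℝ))), (w k)^2 * a k / T
      ≤ d / T := by
    rw [← sum_div]
    have hsub : ∑ k ∈ (range M).filter (fun k => ¬(0 < w k ∧ w k ≤ (T:ℝ))), (w k)^2 * a k ≤ d := by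
      refine le_trans (sum_le_sum_of_subset_of_nonneg (filter_subset _ _) ?_) hd
      intro k _ _
      exact mul_nonneg (sq_nonneg _) (ha k)
    exact div_le_div_of_nonneg_right hsub hTR.le
  linarith [step, hsplit.le, h1, h2, hlow]

lemma unimodal (a : ℕ → ℝ) (Nn n : ℕ) (hnN : n ≤ Nn)
    (hpos : ∀ k, k ≤ Nn → 0 < a k) (hzero : ∀ k, Nn < k → a k = 0)
    (hlc : ∀ k, a (k+2) * a k ≤ a (k+1)^2) :
    (∀ k, n ≤ k → a k ≤ a n) ∨ (∀ k, k ≤ n → a k ≤ a n) := by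
  have hnn : ∀ k, 0 ≤ a k := by
    intro k
    rcases le_or_gt k Nn with h | h
    · exact (hpos k h).le
    · exact (hzero k h).ge
  rcases le_or_gt (a (n+1)) (a n) with hcase | hcase
  · left
    have dec : ∀ j, a (n+j+1) ≤ a (n+j) := by
      intro j
      induction j with
      | zero => exact hcase
      | succ m ihm =>
        show a (n+m+2) ≤ a (n+m+1)
        have ihm' : a (n+m+1) ≤ a (n+m) := ihm
        rcases le_or_gt (n+m+1) Nn with hle | hgt
        · have h1 : 0 < a (n+m+1) := hpos _ hle
          have h2 : a (n+m+2) * a (n+m) ≤ a (n+m+1)^2 := hlc (n+m)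
          have h4 : 0 < a (n+m) := lt_of_lt_of_le h1 ihm'
          nlinarith [h1, h2, ihm', h4]
        · have h5 : a (n+m+2) = 0 := hzero _ (by omega)
          rw [h5]; exact hnn _
    have chain : ∀ j, a (n+j) ≤ a n := by
      intro j
      induction j with
      | zero => simp
      | succ m ihm => exact le_trans (dec m) ihm
    intro k hk
    obtain ⟨j, rfl⟩ := Nat.exists_eq_add_of_le hk
    exact chain j
  · right
    have inc : ∀ j, ∀ k, k + j = n → a k ≤ a (k+1) := by
      intro j
      induction j with
      | zero => intro k hk; subst hk; exact hcase.le
      | succ m ihm =>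
        intro k hk
        have hk1 : (k+1) + m = n := by omega
        have ih2 : a (k+1) ≤ a (k+2) := ihm (k+1) hk1
        have hkn : k + 1 ≤ Nn := by omega
        have h1 : 0 < a (k+1) := hpos _ hkn
        have h2 : a (k+2) * a k ≤ a (k+1)^2 := hlc k
        have : a (k+1) * a k ≤ a (k+1) * a (k+1) := by nlinarith [hnn k]
        nlinarith [this, h1]
    have chain : ∀ j, ∀ k, k + j = n → a k ≤ a n := by
      intro j
      induction j with
      | zero => intro k hk; subst hk; exact le_rfl
      | succ m ihm =>
        intro k hk
        exact le_trans (inc (m+1) k hk) (ihm (k+1) (by omega))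
    intro k hk
    exact chain (n - k) k (by omega)

set_option maxHeartbeats 2000000 in
lemma analysis_main (a : ℕ → ℝ) (Nn n : ℕ) (d : ℝ)
    (hn2 : n + 1 ≤ Nn)
    (hpos : ∀ k, k ≤ Nn → 0 < a k) (hzero : ∀ k, Nn < k → a k = 0)
    (hlc : ∀ k, a (k+2) * a k ≤ a (k+1)^2)
    (hmass : ∑ k ∈ range (Nn+1), a k = 1)
    (hmean : ∑ k ∈ range (Nn+1), ((k:ℝ) - (n:ℝ)) * a k = 0)
    (hvar : ∑ k ∈ range (Nn+1), ((k:ℝ) - (n:ℝ))^2 * a k = d)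
    (hm4 : ∑ k ∈ range (Nn+1), ((k:ℝ) - (n:ℝ))^4 * a k ≤ 3*d^2 + d)
    (hd : 1 ≤ d) :
    (1:ℝ)/3000000 / Real.sqrt d ≤ a n := by
  have hd0 : (0:ℝ) < d := by linarith
  set s := Real.sqrt d with hs
  have hs1 : 1 ≤ s := by
    rw [hs, show (1:ℝ) = Real.sqrt 1 by simp]
    exact Real.sqrt_le_sqrt hd
  have hs0 : 0 < s := by linarith
  have hds : s^2 = d := Real.sq_sqrt hd0.le
  have hnn : ∀ k, 0 ≤ a k := by
    intro k
    rcases le_or_gt k Nn with h | h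
    · exact (hpos k h).le
    · exact (hzero k h).ge
  -- mass far from the mean
  have hother : ∑ k ∈ (range (Nn+1)).filter (fun k : ℕ => ¬ d/2 ≤ ((k:ℝ)-(n:ℝ))^2),
      ((k:ℝ)-(n:ℝ))^2 * a k ≤ d/2 := by
    have h1 : ∑ k ∈ (range (Nn+1)).filter (fun k : ℕ => ¬ d/2 ≤ ((k:ℝ)-(n:ℝ))^2),
        ((k:ℝ)-(n:ℝ))^2 * a k
        ≤ ∑ k ∈ (range (Nn+1)).filter (fun k : ℕ => ¬ d/2 ≤ ((k:ℝ)-(n:ℝ))^2), d/2 * a k := by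
      refine sum_le_sum fun k hk => ?_
      have hk2 : ((k:ℝ)-(n:ℝ))^2 < d/2 := lt_of_not_ge (mem_filter.1 hk).2
      exact mul_le_mul_of_nonneg_right hk2.le (hnn k)
    have h3 : ∑ k ∈ (range (Nn+1)).filter (fun k : ℕ => ¬ d/2 ≤ ((k:ℝ)-(n:ℝ))^2), a k ≤ 1 := by
      rw [← hmass]
      exact sum_le_sum_of_subset_of_nonneg (filter_subset _ _) fun k _ _ => hnn k
    rw [← mul_sum] at h1
    nlinarith [h1, h3, hd0]
  have hBsum : d/2 ≤ ∑ k ∈ (range (Nn+1)).filter (fun k : ℕ => d/2 ≤ ((k:ℝ)-(n:ℝ))^2),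
      ((k:ℝ)-(n:ℝ))^2 * a k := by
    have h := sum_filter_add_sum_filter_not (range (Nn+1))
      (fun k => d/2 ≤ ((k:ℝ)-(n:ℝ))^2) (fun k => ((k:ℝ)-(n:ℝ))^2 * a k)
    rw [hvar] at h
    linarith
  have hB4 : ∑ k ∈ (range (Nn+1)).filter (fun k : ℕ => d/2 ≤ ((k:ℝ)-(n:ℝ))^2),
      ((k:ℝ)-(n:ℝ))^4 * a k ≤ 4*d^2 := by
    have h1 : ∑ k ∈ (range (Nn+1)).filter (fun k : ℕ => d/2 ≤ ((k:ℝ)-(n:ℝ))^2),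
        ((k:ℝ)-(n:ℝ))^4 * a k ≤ ∑ k ∈ range (Nn+1), ((k:ℝ)-(n:ℝ))^4 * a k :=
      sum_le_sum_of_subset_of_nonneg (filter_subset _ _)
        (fun k _ _ => mul_nonneg (by positivity) (hnn k))
    nlinarith [h1, hm4]
  -- Cauchy-Schwarz on the far set
  have hCS := sum_mul_sq_le_sq_mul_sq
    ((range (Nn+1)).filter (fun k : ℕ => d/2 ≤ ((k:ℝ)-(n:ℝ))^2))
    (fun k => ((k:ℝ)-(n:ℝ))^2 * Real.sqrt (a k)) (fun k => Real.sqrt (a k))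
  have e1 : ∑ k ∈ (range (Nn+1)).filter (fun k : ℕ => d/2 ≤ ((k:ℝ)-(n:ℝ))^2),
      (((k:ℝ)-(n:ℝ))^2 * Real.sqrt (a k)) * Real.sqrt (a k)
      = ∑ k ∈ (range (Nn+1)).filter (fun k : ℕ => d/2 ≤ ((k:ℝ)-(n:ℝ))^2),
        ((k:ℝ)-(n:ℝ))^2 * a k :=
    sum_congr rfl fun k _ => by rw [mul_assoc, Real.mul_self_sqrt (hnn k)]
  have e2 : ∑ k ∈ (range (Nn+1)).filter (fun k : ℕ => d/2 ≤ ((k:ℝ)-(n:ℝ))^2),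
      (((k:ℝ)-(n:ℝ))^2 * Real.sqrt (a k))^2
      = ∑ k ∈ (range (Nn+1)).filter (fun k : ℕ => d/2 ≤ ((k:ℝ)-(n:ℝ))^2),
        ((k:ℝ)-(n:ℝ))^4 * a k :=
    sum_congr rfl fun k _ => by rw [mul_pow, Real.sq_sqrt (hnn k)]; ring
  have e3 : ∑ k ∈ (range (Nn+1)).filter (fun k : ℕ => d/2 ≤ ((k:ℝ)-(n:ℝ))^2),
      (Real.sqrt (a k))^2
      = ∑ k ∈ (range (Nn+1)).filter (fun k : ℕ => d/2 ≤ ((k:ℝ)-(n:ℝ))^2), a k :=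
    sum_congr rfl fun k _ => Real.sq_sqrt (hnn k)
  rw [e1, e2, e3] at hCS
  -- mass of the far set is at least 1/16
  have hSB : (1:ℝ)/16 ≤ ∑ k ∈ (range (Nn+1)).filter (fun k : ℕ => d/2 ≤ ((k:ℝ)-(n:ℝ))^2), a k := by
    have hsq : (d/2)^2 ≤ (∑ k ∈ (range (Nn+1)).filter (fun k : ℕ => d/2 ≤ ((k:ℝ)-(n:ℝ))^2),
        ((k:ℝ)-(n:ℝ))^2 * a k)^2 := by
      have h0 : (0:ℝ) ≤ d/2 := by linarith
      exact pow_le_pow_left₀ h0 hBsum 2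
    have hSB0 : (0:ℝ) ≤ ∑ k ∈ (range (Nn+1)).filter (fun k : ℕ => d/2 ≤ ((k:ℝ)-(n:ℝ))^2), a k :=
      sum_nonneg fun k _ => hnn k
    nlinarith [hsq, hCS, hB4, hSB0, mul_pos hd0 hd0]
  -- absolute first moment lower bound
  have habs : s/32 ≤ ∑ k ∈ range (Nn+1), |(k:ℝ)-(n:ℝ)| * a k := by
    have h1 : ∀ k ∈ (range (Nn+1)).filter (fun k : ℕ => d/2 ≤ ((k:ℝ)-(n:ℝ))^2),
        s/2 * a k ≤ |(k:ℝ)-(n:ℝ)| * a k := by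
      intro k hk
      have hk2 : d/2 ≤ ((k:ℝ)-(n:ℝ))^2 := (mem_filter.1 hk).2
      have habs2 : s/2 ≤ |(k:ℝ)-(n:ℝ)| := by
        have h4 : (s/2)^2 ≤ ((k:ℝ)-(n:ℝ))^2 := by nlinarith [hds]
        calc s/2 = Real.sqrt ((s/2)^2) := (Real.sqrt_sq (by positivity)).symm
          _ ≤ Real.sqrt (((k:ℝ)-(n:ℝ))^2) := Real.sqrt_le_sqrt h4
          _ = |(k:ℝ)-(n:ℝ)| := Real.sqrt_sq_eq_abs _
      exact mul_le_mul_of_nonneg_right habs2 (hnn k)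
    have h2 : s/2 * ∑ k ∈ (range (Nn+1)).filter (fun k : ℕ => d/2 ≤ ((k:ℝ)-(n:ℝ))^2), a k
        ≤ ∑ k ∈ (range (Nn+1)).filter (fun k : ℕ => d/2 ≤ ((k:ℝ)-(n:ℝ))^2),
          |(k:ℝ)-(n:ℝ)| * a k := by
      rw [mul_sum]
      exact sum_le_sum h1
    have h3 : ∑ k ∈ (range (Nn+1)).filter (fun k : ℕ => d/2 ≤ ((k:ℝ)-(n:ℝ))^2),
        |(k:ℝ)-(n:ℝ)| * a k ≤ ∑ k ∈ range (Nn+1), |(k:ℝ)-(n:ℝ)| * a k :=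
      sum_le_sum_of_subset_of_nonneg (filter_subset _ _)
        (fun k _ _ => mul_nonneg (abs_nonneg _) (hnn k))
    nlinarith [h2, h3, hSB, hs0]
  -- positive and negative parts
  have hplus : s/64 ≤ ∑ k ∈ range (Nn+1), max ((k:ℝ)-(n:ℝ)) 0 * a k := by
    have hsub : ∑ k ∈ range (Nn+1), max ((k:ℝ)-(n:ℝ)) 0 * a k
        - ∑ k ∈ range (Nn+1), max ((n:ℝ)-(k:ℝ)) 0 * a k = 0 := by
      rw [← sum_sub_distrib]
      have he : ∑ k ∈ range (Nn+1), (max ((k:ℝ)-(n:ℝ)) 0 * a k - max ((n:ℝ)-(k:ℝ)) 0 * a k)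
          = ∑ k ∈ range (Nn+1), ((k:ℝ)-(n:ℝ)) * a k := by
        refine sum_congr rfl fun k _ => ?_
        rcases le_total ((k:ℝ)-(n:ℝ)) 0 with h | h
        · rw [max_eq_right h, max_eq_left (by linarith : (0:ℝ) ≤ (n:ℝ)-(k:ℝ)), zero_mul]; ring
        · rw [max_eq_left h, max_eq_right (by linarith : (n:ℝ)-(k:ℝ) ≤ 0), zero_mul]; ring
      rw [he, hmean]
    have hadd : ∑ k ∈ range (Nn+1), max ((k:ℝ)-(n:ℝ)) 0 * a k
        + ∑ k ∈ range (Nn+1), max ((n:ℝ)-(k:ℝ)) 0 * a k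
        = ∑ k ∈ range (Nn+1), |(k:ℝ)-(n:ℝ)| * a k := by
      rw [← sum_add_distrib]
      refine sum_congr rfl fun k _ => ?_
      rcases le_total ((k:ℝ)-(n:ℝ)) 0 with h | h
      · rw [max_eq_right h, max_eq_left (by linarith : (0:ℝ) ≤ (n:ℝ)-(k:ℝ)), abs_of_nonpos h, zero_mul]; ring
      · rw [max_eq_left h, max_eq_right (by linarith : (n:ℝ)-(k:ℝ) ≤ 0), abs_of_nonneg h, zero_mul]; ring
    linarith [habs]
  have hminus : s/64 ≤ ∑ k ∈ range (Nn+1), max ((n:ℝ)-(k:ℝ)) 0 * a k := by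
    have hsub : ∑ k ∈ range (Nn+1), max ((k:ℝ)-(n:ℝ)) 0 * a k
        - ∑ k ∈ range (Nn+1), max ((n:ℝ)-(k:ℝ)) 0 * a k = 0 := by
      rw [← sum_sub_distrib]
      have he : ∑ k ∈ range (Nn+1), (max ((k:ℝ)-(n:ℝ)) 0 * a k - max ((n:ℝ)-(k:ℝ)) 0 * a k)
          = ∑ k ∈ range (Nn+1), ((k:ℝ)-(n:ℝ)) * a k := by
        refine sum_congr rfl fun k _ => ?_
        rcases le_total ((k:ℝ)-(n:ℝ)) 0 with h | h
        · rw [max_eq_right h, max_eq_left (by linarith : (0:ℝ) ≤ (n:ℝ)-(k:ℝ)), zero_mul]; ring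
        · rw [max_eq_left h, max_eq_right (by linarith : (n:ℝ)-(k:ℝ) ≤ 0), zero_mul]; ring
      rw [he, hmean]
    linarith [hplus, hsub]
  -- choose the threshold
  set T : ℕ := ⌈(128:ℝ)*s⌉₊ with hT
  have hT1 : (128:ℝ)*s ≤ (T:ℝ) := Nat.le_ceil _
  have hT2 : (T:ℝ) ≤ 129*s := by
    have := Nat.ceil_lt_add_one (show (0:ℝ) ≤ 128*s by positivity)
    rw [← hT] at this
    linarith
  have hTpos : 0 < T := by
    have h : (0:ℝ) < (T:ℝ) := lt_of_lt_of_le (by positivity) hT1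
    exact_mod_cast h
  -- both unimodality cases give the same side bound
  have hside : s/64 ≤ (T:ℝ)^2 * a n + d / (T:ℝ) := by
    rcases unimodal a Nn n (by omega) hpos hzero hlc with hu | hu
    · -- decreasing to the right of n
      refine side_bound a (fun k => max ((k:ℝ)-(n:ℝ)) 0) (Nn+1) T (a n) d (s/64)
        hnn (fun k => le_max_right _ _) ?_ ?_ ?_ (hnn n) hTpos hplus
      · refine le_of_le_of_eq (sum_le_sum fun k _ => ?_) hvar
        show (max ((k:ℝ)-(n:ℝ)) 0)^2 * a k ≤ ((k:ℝ)-(n:ℝ))^2 * a k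
        rcases le_total ((k:ℝ)-(n:ℝ)) 0 with h | h
        · rw [max_eq_right h]
          exact mul_le_mul_of_nonneg_right (by simpa using sq_nonneg ((k:ℝ)-(n:ℝ))) (hnn k)
        · rw [max_eq_left h]
      · have hsubset : (range (Nn+1)).filter
            (fun k : ℕ => 0 < max ((k:ℝ)-(n:ℝ)) 0 ∧ max ((k:ℝ)-(n:ℝ)) 0 ≤ (T:ℝ))
            ⊆ Finset.Ioc n (n+T) := by
          intro k hk
          rw [mem_filter] at hk
          obtain ⟨_, hw1, hw2⟩ := hk
          have h1 : n < k := by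
            by_contra hcon
            push_neg at hcon
            have hle : (k:ℝ) - (n:ℝ) ≤ 0 := by
              have : (k:ℝ) ≤ (n:ℝ) := by exact_mod_cast hcon
              linarith
            rw [max_eq_right hle] at hw1
            exact lt_irrefl 0 hw1
          have h2 : k ≤ n + T := by
            have hx : (k:ℝ) - (n:ℝ) ≤ (T:ℝ) := le_trans (le_max_left _ _) hw2
            have : (k:ℝ) ≤ (n:ℝ) + (T:ℝ) := by linarith
            exact_mod_cast this
          exact Finset.mem_Ioc.2 ⟨h1, h2⟩
        have hcc : ((range (Nn+1)).filter
            (fun k : ℕ => 0 < max ((k:ℝ)-(n:ℝ)) 0 ∧ max ((k:ℝ)-(n:ℝ)) 0 ≤ (T:ℝ))).card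
            ≤ (Finset.Ioc n (n+T)).card := card_le_card hsubset
        rw [Nat.card_Ioc] at hcc
        exact hcc.trans (by omega)
      · intro k _ hw1 _
        have hw1' : 0 < max ((k:ℝ)-(n:ℝ)) 0 := hw1
        have hkn : n < k := by
          by_contra hcon
          push_neg at hcon
          have hle : (k:ℝ) - (n:ℝ) ≤ 0 := by
            have : (k:ℝ) ≤ (n:ℝ) := by exact_mod_cast hcon
            linarith
          rw [max_eq_right hle] at hw1'
          exact lt_irrefl 0 hw1'
        exact hu k hkn.le
    · -- increasing to the left of n
      refine side_bound a (fun k => max ((n:ℝ)-(k:ℝ)) 0) (Nn+1) T (a n) d (s/64)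
        hnn (fun k => le_max_right _ _) ?_ ?_ ?_ (hnn n) hTpos hminus
      · refine le_of_le_of_eq (sum_le_sum fun k _ => ?_) hvar
        show (max ((n:ℝ)-(k:ℝ)) 0)^2 * a k ≤ ((k:ℝ)-(n:ℝ))^2 * a k
        rcases le_total ((n:ℝ)-(k:ℝ)) 0 with h | h
        · rw [max_eq_right h]
          exact mul_le_mul_of_nonneg_right (by simpa using sq_nonneg ((k:ℝ)-(n:ℝ))) (hnn k)
        · rw [max_eq_left h]
          refine mul_le_mul_of_nonneg_right ?_ (hnn k)
          nlinarith
      · have hsubset : (range (Nn+1)).filter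
            (fun k : ℕ => 0 < max ((n:ℝ)-(k:ℝ)) 0 ∧ max ((n:ℝ)-(k:ℝ)) 0 ≤ (T:ℝ))
            ⊆ Finset.Ico (n-T) n := by
          intro k hk
          rw [mem_filter] at hk
          obtain ⟨_, hw1, hw2⟩ := hk
          have h1 : k < n := by
            by_contra hcon
            push_neg at hcon
            have hle : (n:ℝ) - (k:ℝ) ≤ 0 := by
              have : (n:ℝ) ≤ (k:ℝ) := by exact_mod_cast hcon
              linarith
            rw [max_eq_right hle] at hw1
            exact lt_irrefl 0 hw1
          have h2 : n ≤ k + T := by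
            have hx : (n:ℝ) - (k:ℝ) ≤ (T:ℝ) := le_trans (le_max_left _ _) hw2
            have : (n:ℝ) ≤ (k:ℝ) + (T:ℝ) := by linarith
            exact_mod_cast this
          exact Finset.mem_Ico.2 ⟨by omega, h1⟩
        have hcc : ((range (Nn+1)).filter
            (fun k : ℕ => 0 < max ((n:ℝ)-(k:ℝ)) 0 ∧ max ((n:ℝ)-(k:ℝ)) 0 ≤ (T:ℝ))).card
            ≤ (Finset.Ico (n-T) n).card := card_le_card hsubset
        rw [Nat.card_Ico] at hcc
        exact hcc.trans (by omega)
      · intro k _ hw1 _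
        have hw1' : 0 < max ((n:ℝ)-(k:ℝ)) 0 := hw1
        have hkn : k < n := by
          by_contra hcon
          push_neg at hcon
          have hle : (n:ℝ) - (k:ℝ) ≤ 0 := by
            have : (n:ℝ) ≤ (k:ℝ) := by exact_mod_cast hcon
            linarith
          rw [max_eq_right hle] at hw1'
          exact lt_irrefl 0 hw1'
        exact hu k hkn.le
  -- endgame arithmetic
  have hdT : d / (T:ℝ) ≤ s/128 := by
    have h1 : d / (T:ℝ) ≤ d / (128*s) :=
      div_le_div_of_nonneg_left hd0.le (by positivity) hT1
    have h2 : d / (128*s) = s/128 := by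
      rw [← hds]; field_simp
    linarith
  have hTa : s/128 ≤ (T:ℝ)^2 * a n := by linarith
  have hT2sq : (T:ℝ)^2 ≤ 16641 * s^2 := by nlinarith [hT2, hT1, hs0]
  have h7 : s/128 ≤ 16641 * s^2 * a n := by
    have : (T:ℝ)^2 * a n ≤ 16641 * s^2 * a n :=
      mul_le_mul_of_nonneg_right hT2sq (hnn n)
    linarith
  rw [div_le_iff₀ hs0]
  nlinarith [h7, hs0, hnn n, mul_pos hs0 hs0]

open MeasureTheory ProbabilityTheory

lemma measure_sum_eq {Ω : Type} [MeasurableSpace Ω] (μ : Measure Ω) [IsProbabilityMeasure μ]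
    {N : ℕ} (p : Fin N → ℝ) (ε : Ω → Fin N → ℝ)
    (hp : ∀ i, 0 < p i ∧ p i < 1)
    (hmeas : ∀ i, Measurable fun ω => ε ω i)
    (h01 : ∀ ω i, ε ω i = 0 ∨ ε ω i = 1)
    (hindep : iIndepFun (fun i ω => ε ω i) μ)
    (hmarg : ∀ i, μ {ω | ε ω i = 1} = ENNReal.ofReal (p i)) (k : ℕ) :
    μ {ω | ∑ i, ε ω i = (k:ℝ)} = ENNReal.ofReal (bseq p univ k) := by
  classical
  have hset : {ω | ∑ i, ε ω i = (k:ℝ)}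
      = ⋃ T ∈ (univ : Finset (Fin N)).powersetCard k,
          ⋂ i, (fun ω => ε ω i) ⁻¹' {if i ∈ T then (1:ℝ) else 0} := by
    ext ω
    simp only [Set.mem_setOf_eq, Set.mem_iUnion, Set.mem_iInter, Set.mem_preimage,
      Set.mem_singleton_iff]
    have hsum : ∑ i, ε ω i = ((univ.filter (fun i => ε ω i = 1)).card : ℝ) := by
      rw [← Finset.sum_boole]
      refine sum_congr rfl fun i _ => ?_
      rcases h01 ω i with h | h <;> simp [h]
    rw [hsum]
    constructor
    · intro h
      refine ⟨univ.filter (fun i => ε ω i = 1),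
        mem_powersetCard.2 ⟨subset_univ _, by exact_mod_cast h⟩, fun i => ?_⟩
      by_cases hi : ε ω i = 1
      · rw [if_pos (mem_filter.2 ⟨mem_univ i, hi⟩)]; exact hi
      · have hni : i ∉ univ.filter (fun j => ε ω j = 1) :=
          fun hmem => hi (mem_filter.1 hmem).2
        rw [if_neg hni]
        rcases h01 ω i with h0 | h1
        · exact h0
        · exact absurd h1 hi
    · rintro ⟨T, hT, hT2⟩
      have heq : univ.filter (fun i => ε ω i = 1) = T := by
        ext i
        simp only [mem_filter, mem_univ, true_and]
        constructor
        · intro h1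
          by_contra hiT
          rw [hT2 i, if_neg hiT] at h1
          norm_num at h1
        · intro hiT
          rw [hT2 i, if_pos hiT]
      rw [heq]
      exact_mod_cast congrArg (Nat.cast : ℕ → ℝ) (mem_powersetCard.1 hT).2
  rw [hset]
  have hEm : ∀ T : Finset (Fin N),
      MeasurableSet (⋂ i, (fun ω => ε ω i) ⁻¹' {if i ∈ T then (1:ℝ) else 0}) :=
    fun T => MeasurableSet.iInter fun i => (hmeas i) (measurableSet_singleton _)
  have hkeyT : ∀ (ω : Ω) (T : Finset (Fin N)),
      (∀ i, ε ω i = if i ∈ T then (1:ℝ) else 0) → ∀ i, (i ∈ T ↔ ε ω i = 1) := by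
    intro ω T hT i
    constructor
    · intro hi; rw [hT i, if_pos hi]
    · intro hi
      by_contra hiT
      rw [hT i, if_neg hiT] at hi
      norm_num at hi
  have hdisj : Set.PairwiseDisjoint (↑((univ : Finset (Fin N)).powersetCard k))
      (fun T : Finset (Fin N) => ⋂ i, (fun ω => ε ω i) ⁻¹' {if i ∈ T then (1:ℝ) else 0}) := by
    intro T _ T' _ hne
    refine Set.disjoint_left.2 fun ω h1 h2 => hne ?_
    simp only [Set.mem_iInter, Set.mem_preimage, Set.mem_singleton_iff] at h1 h2
    ext i
    rw [hkeyT ω T h1 i, hkeyT ω T' h2 i]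
  rw [measure_biUnion_finset hdisj (fun T _ => hEm T)]
  have hterm : ∀ T ∈ (univ : Finset (Fin N)).powersetCard k,
      μ (⋂ i, (fun ω => ε ω i) ⁻¹' {if i ∈ T then (1:ℝ) else 0})
        = ENNReal.ofReal (∏ i, if i ∈ T then p i else 1 - p i) := by
    intro T _
    have h1 : (⋂ i, (fun ω => ε ω i) ⁻¹' ({if i ∈ T then (1:ℝ) else 0} : Set ℝ))
        = ⋂ i ∈ (univ : Finset (Fin N)),
            (fun ω => ε ω i) ⁻¹' ({if i ∈ T then (1:ℝ) else 0} : Set ℝ) := by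
      simp
    have h2 : μ (⋂ i ∈ (univ : Finset (Fin N)),
          (fun ω => ε ω i) ⁻¹' ({if i ∈ T then (1:ℝ) else 0} : Set ℝ))
        = ∏ i, μ ((fun ω => ε ω i) ⁻¹' ({if i ∈ T then (1:ℝ) else 0} : Set ℝ)) :=
      hindep.measure_inter_preimage_eq_mul univ (fun i _ => measurableSet_singleton _)
    have hnn : ∀ i ∈ (univ : Finset (Fin N)), 0 ≤ if i ∈ T then p i else 1 - p i := by
      intro i _
      by_cases hi : i ∈ T
      · rw [if_pos hi]; exact (hp i).1.le
      · rw [if_neg hi]; linarith [(hp i).2]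
    rw [h1, h2, ENNReal.ofReal_prod_of_nonneg hnn]
    · refine prod_congr rfl fun i _ => ?_
      by_cases hi : i ∈ T
      · rw [if_pos hi, if_pos hi]
        have hpre : (fun ω => ε ω i) ⁻¹' ({(1:ℝ)} : Set ℝ) = {ω | ε ω i = 1} := rfl
        rw [hpre, hmarg i]
      · rw [if_neg hi, if_neg hi]
        have hc : (fun ω => ε ω i) ⁻¹' ({(0:ℝ)} : Set ℝ) = {ω | ε ω i = 1}ᶜ := by
          ext ω
          simp only [Set.mem_preimage, Set.mem_singleton_iff, Set.mem_compl_iff,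
            Set.mem_setOf_eq]
          constructor
          · intro h; rw [h]; norm_num
          · intro h
            rcases h01 ω i with h0 | h1
            · exact h0
            · exact absurd h1 h
        have hm1 : MeasurableSet {ω | ε ω i = 1} :=
          (hmeas i) (measurableSet_singleton (1:ℝ))
        rw [hc, prob_compl_eq_one_sub hm1, hmarg i]
        rw [show (1:ℝ) - p i = 1 - p i from rfl]
        rw [ENNReal.ofReal_sub 1 (hp i).1.le, ENNReal.ofReal_one]
  rw [sum_congr rfl hterm, ← ENNReal.ofReal_sum_of_nonneg]
  · rfl
  · intro T _
    refine prod_nonneg fun i _ => ?_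
    by_cases hi : i ∈ T
    · rw [if_pos hi]; exact (hp i).1.le
    · rw [if_neg hi]; linarith [(hp i).2]

end PB

open MeasureTheory ProbabilityTheory Real Finset

/-- `H(x) = (1+x)log(1+x) - x`. -/
noncomputable def entH (x : ℝ) : ℝ := (1 + x) * Real.log (1 + x) - x

/-- Universal lower bound for the probability that a Poisson sample size hits its mean. -/
theorem poisson_size_atom_lower_bound :
    ∃ C₁ D : ℝ, 0 < C₁ ∧
      ∀ (Ω : Type) (_ : MeasurableSpace Ω) (μ : Measure Ω) (_ : IsProbabilityMeasure μ)
        (N : ℕ), 1 ≤ N → ∀ n : ℕ, n ≤ N →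
        ∀ (p : Fin N → ℝ) (ε : Ω → Fin N → ℝ),
          (∀ i, 0 < p i ∧ p i < 1) → (∑ i, p i = (n : ℝ)) →
          (∀ i, Measurable fun ω => ε ω i) →
          (∀ ω i, ε ω i = 0 ∨ ε ω i = 1) →
          iIndepFun (fun i ω => ε ω i) μ →
          (∀ i, μ {ω | ε ω i = 1} = ENNReal.ofReal (p i)) →
          ∀ dN : ℝ, dN = ∑ i, p i * (1 - p i) → D ≤ dN →
            ENNReal.ofReal (C₁ / Real.sqrt dN) ≤ μ {ω | ∑ i, ε ω i = (n : ℝ)} := by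
  classical
  refine ⟨1/3000000, 1, by norm_num, ?_⟩
  intro Ω mΩ μ hprob N hN n hnN p ε hp hsum hmeas h01 hindep hmarg dN hdN hDd
  haveI := hprob
  have hp' : ∀ i ∈ (univ : Finset (Fin N)), 0 < p i ∧ p i < 1 := fun i _ => hp i
  have hcard : (univ : Finset (Fin N)).card = N := by simp
  have hFin : Nonempty (Fin N) := ⟨⟨0, hN⟩⟩
  have huniv : (univ : Finset (Fin N)).Nonempty := univ_nonempty
  -- n ≥ 1 and n < N
  have hsumpos : (0:ℝ) < ∑ i, p i := sum_pos (fun i _ => (hp i).1) huniv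
  have hn1 : 1 ≤ n := by
    rcases Nat.eq_zero_or_pos n with h | h
    · rw [hsum] at hsumpos
      exfalso
      rw [h] at hsumpos
      norm_num at hsumpos
    · exact h
  have hnltN : n + 1 ≤ N := by
    have hlt : (∑ i, p i) < ∑ _i : Fin N, (1:ℝ) :=
      sum_lt_sum_of_nonempty huniv (fun i _ => (hp i).2)
    rw [hsum] at hlt
    simp only [sum_const, hcard, nsmul_eq_mul, mul_one] at hlt
    have : n < N := by exact_mod_cast hlt
    omega
  obtain ⟨hm0, hm1, hm2, hm4⟩ := PB.bseq_moments p hp'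
  rw [hcard] at hm0 hm1 hm2 hm4
  rw [hsum] at hm1 hm2 hm4
  rw [← hdN] at hm2 hm4
  have hkey := PB.measure_sum_eq μ p ε hp hmeas h01 hindep hmarg n
  rw [hkey]
  refine ENNReal.ofReal_le_ofReal ?_
  refine PB.analysis_main (PB.bseq p univ) N n dN hnltN
    (fun k hk => PB.bseq_pos p hp' (by rw [hcard]; exact hk))
    (fun k hk => PB.bseq_eq_zero p (by rw [hcard]; exact hk))
    (PB.bseq_logconcave p univ hp') hm0 hm1 hm2 hm4 hDd
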